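/- Let p(a_B,a_C,b_A,b_C) be an ε₁-trilocal behaviour (admitting decomposition p = Σ_{λ,α,β,γ} p(λ)p(α,β,γ|λ) p(a|β,γ)p(b|α,γ)p(c|α,β) with ε₁ p(α)p(β)p(γ) ≤ p(α,β,γ|λ) ≤ ε₂ p(α)p(β)p(γ)) satisfying the consistency condition p(A_C=C_A ∧ B_C=C_B)=1, with deterministic local response functions. Then for all a_B,b_A and all a_C,b_C with p(a_C)>0, p(b_C)>0: p(a_B,a_C,b_A,b_C) ≥ ξ₁ Σ_γ p(γ) p(a_B|a_C,γ) p(b_A|b_C,γ), where ξ₁ = (ε₁³/ε₂⁶)·min_{a_C: p(a_C)>0} p(a_C) · min_{b_C: p(b_C)>0} p(b_C) and the conditionals p(a_B|a_C,γ), p(b_A|b_C,γ) are suitable response distributions. -/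
import Mathlib


open Finset

section TLAux
variable {I1 I2 I3 I4 I5 I6 : Type*} [Fintype I1] [Fintype I2] [Fintype I3] [Fintype I4]
  [Fintype I5] [Fintype I6]

lemma tl_flat2 (f : I1 → I2 → ℝ) :
    ∑ a, ∑ b, f a b = ∑ x : I1 × I2, f x.1 x.2 := by
  simp [Fintype.sum_prod_type]

lemma tl_flat4 (f : I1 → I2 → I3 → I4 → ℝ) :
    ∑ a, ∑ b, ∑ c, ∑ d, f a b c d = ∑ x : I1 × I2 × I3 × I4, f x.1 x.2.1 x.2.2.1 x.2.2.2 := by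
  simp [Fintype.sum_prod_type]

lemma tl_flat5 (f : I1 → I2 → I3 → I4 → I5 → ℝ) :
    ∑ a, ∑ b, ∑ c, ∑ d, ∑ e, f a b c d e
      = ∑ x : I1 × I2 × I3 × I4 × I5, f x.1 x.2.1 x.2.2.1 x.2.2.2.1 x.2.2.2.2 := by
  simp [Fintype.sum_prod_type]

lemma tl_flat6 (f : I1 → I2 → I3 → I4 → I5 → I6 → ℝ) :
    ∑ a, ∑ b, ∑ c, ∑ d, ∑ e, ∑ g, f a b c d e g
      = ∑ x : I1 × I2 × I3 × I4 × I5 × I6,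
          f x.1 x.2.1 x.2.2.1 x.2.2.2.1 x.2.2.2.2.1 x.2.2.2.2.2 := by
  simp [Fintype.sum_prod_type]

lemma tl_comm3 (h : I1 → I2 → I3 → ℝ) :
    ∑ α, ∑ β, ∑ γ, h α β γ = ∑ γ, ∑ β, ∑ α, h α β γ := by
  calc ∑ α, ∑ β, ∑ γ, h α β γ = ∑ α, ∑ γ, ∑ β, h α β γ :=
        Finset.sum_congr rfl fun _ _ => Finset.sum_comm
    _ = ∑ γ, ∑ α, ∑ β, h α β γ := Finset.sum_comm
    _ = ∑ γ, ∑ β, ∑ α, h α β γ := Finset.sum_congr rfl fun _ _ => Finset.sum_comm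

lemma tl_factor3 (f : I1 → I3 → ℝ) (g : I2 → I3 → ℝ) (w : I3 → ℝ) :
    ∑ α, ∑ β, ∑ γ, f α γ * g β γ * w γ = ∑ γ, w γ * (∑ β, g β γ) * (∑ α, f α γ) := by
  rw [tl_comm3]
  apply Finset.sum_congr rfl
  intro γ _
  simp only [Finset.mul_sum, Finset.sum_mul]
  rw [Finset.sum_comm]
  exact Finset.sum_congr rfl fun β _ => Finset.sum_congr rfl fun α _ => by ring

end TLAux

section TLPerX

lemma tl_perx2 (k : ℝ) (h : Fin 2 → Fin 2 → ℝ) (hh : ∑ a, ∑ b, h a b = 1) :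
    ∑ c1, ∑ c2, k * h c1 c2 = k := by
  have : ∑ c1, ∑ c2, k * h c1 c2 = k * (∑ a, ∑ b, h a b) := by
    simp only [Fin.sum_univ_two]; ring
  rw [this, hh, mul_one]

lemma tl_perx6 (k : ℝ) (f g h : Fin 2 → Fin 2 → ℝ) (hf : ∑ a, ∑ b, f a b = 1)
    (hg : ∑ a, ∑ b, g a b = 1) (hh : ∑ a, ∑ b, h a b = 1) :
    ∑ a1, ∑ a2, ∑ b1, ∑ b2, ∑ c1, ∑ c2, k * f a1 a2 * g b1 b2 * h c1 c2 = k := by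
  have : ∑ a1, ∑ a2, ∑ b1, ∑ b2, ∑ c1, ∑ c2, k * f a1 a2 * g b1 b2 * h c1 c2
      = k * (∑ a1, ∑ a2, f a1 a2) * (∑ b1, ∑ b2, g b1 b2) * (∑ c1, ∑ c2, h c1 c2) := by
    simp only [Fin.sum_univ_two]; ring
  rw [this, hf, hg, hh]; ring

lemma tl_perx5A (k : ℝ) (a0 : Fin 2) (f g h : Fin 2 → Fin 2 → ℝ)
    (hg : ∑ a, ∑ b, g a b = 1) (hh : ∑ a, ∑ b, h a b = 1) :
    ∑ a1, ∑ b1, ∑ b2, ∑ c1, ∑ c2, k * f a1 a0 * g b1 b2 * h c1 c2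
      = k * ∑ a1, f a1 a0 := by
  have : ∑ a1, ∑ b1, ∑ b2, ∑ c1, ∑ c2, k * f a1 a0 * g b1 b2 * h c1 c2
      = k * (∑ a1, f a1 a0) * (∑ b1, ∑ b2, g b1 b2) * (∑ c1, ∑ c2, h c1 c2) := by
    simp only [Fin.sum_univ_two]; ring
  rw [this, hg, hh]; ring

lemma tl_perx5B (k : ℝ) (b0 : Fin 2) (f g h : Fin 2 → Fin 2 → ℝ)
    (hf : ∑ a, ∑ b, f a b = 1) (hh : ∑ a, ∑ b, h a b = 1) :
    ∑ a1, ∑ a2, ∑ b1, ∑ c1, ∑ c2, k * f a1 a2 * g b1 b0 * h c1 c2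
      = k * ∑ b1, g b1 b0 := by
  have : ∑ a1, ∑ a2, ∑ b1, ∑ c1, ∑ c2, k * f a1 a2 * g b1 b0 * h c1 c2
      = k * (∑ a1, ∑ a2, f a1 a2) * (∑ b1, g b1 b0) * (∑ c1, ∑ c2, h c1 c2) := by
    simp only [Fin.sum_univ_two]; ring
  rw [this, hf, hh]; ring

end TLPerX

section TLResp
variable {B C : Type*} [Fintype B]

noncomputable def tlResp (pB : B → ℝ) (ra : B → C → Fin 2 → Fin 2 → ℝ)
    (aB aC : Fin 2) (γ : C) : ℝ :=
  if (∑ aB', ∑ β, pB β * ra β γ aB' aC) = 0 then 1/2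
  else (∑ β, pB β * ra β γ aB aC) / (∑ aB', ∑ β, pB β * ra β γ aB' aC)

lemma tlResp_nonneg (pB : B → ℝ) (ra : B → C → Fin 2 → Fin 2 → ℝ)
    (hpB : ∀ β, 0 ≤ pB β) (hra : ∀ β γ a b, 0 ≤ ra β γ a b) (aB aC : Fin 2) (γ : C) :
    0 ≤ tlResp pB ra aB aC γ := by
  unfold tlResp
  split
  · norm_num
  · exact div_nonneg (Finset.sum_nonneg fun β _ => mul_nonneg (hpB β) (hra _ _ _ _))
      (Finset.sum_nonneg fun a _ => Finset.sum_nonneg fun β _ =>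
        mul_nonneg (hpB β) (hra _ _ _ _))

lemma tlResp_sum (pB : B → ℝ) (ra : B → C → Fin 2 → Fin 2 → ℝ) (aC : Fin 2) (γ : C) :
    ∑ aB, tlResp pB ra aB aC γ = 1 := by
  unfold tlResp
  by_cases h : (∑ aB', ∑ β, pB β * ra β γ aB' aC) = 0
  · simp [h]
  · simp only [if_neg h]
    rw [← Finset.sum_div, div_self h]

lemma tlResp_mul (pB : B → ℝ) (ra : B → C → Fin 2 → Fin 2 → ℝ) (aB aC : Fin 2) (γ : C)
    (h : (∑ aB', ∑ β, pB β * ra β γ aB' aC) ≠ 0) :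
    tlResp pB ra aB aC γ * (∑ aB', ∑ β, pB β * ra β γ aB' aC)
      = ∑ β, pB β * ra β γ aB aC := by
  unfold tlResp
  rw [if_neg h, div_mul_cancel₀ _ h]

end TLResp


/-- Lower bound of Lemma 1: for an `ε₁`-trilocal behaviour on the triangle network
(with correlated sources satisfying the two-sided independence condition, deterministic
Charlie responses, and the consistency condition `p(A_C=C_A ∧ B_C=C_B)=1`), there exist
response distributions `F(a_B|a_C,γ')`, `G(b_A|b_C,γ')` over the effective hidden variable
`γ' = (λ,γ)` such that
`p(a_B,a_C,b_A,b_C) ≥ ξ₁ Σ_{γ'} p(γ') F(a_B|a_C,γ') G(b_A|b_C,γ')`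
with `ξ₁ = (ε₁³/ε₂⁶)·min_{a_C:p(a_C)>0} p(a_C)·min_{b_C:p(b_C)>0} p(b_C)`. -/
theorem trilocal_lemma_lower_bound
    {Λ A B C : Type*} [Fintype Λ] [Fintype A] [Fintype B] [Fintype C]
    (pl : Λ → ℝ) (pc : Λ → A → B → C → ℝ)
    (hpl : ∀ l, 0 ≤ pl l) (hpl1 : ∑ l, pl l = 1)
    (hpc : ∀ l α β γ, 0 ≤ pc l α β γ)
    (hpc1 : ∀ l, ∑ α, ∑ β, ∑ γ, pc l α β γ = 1)
    (pA : A → ℝ) (pB : B → ℝ) (pC : C → ℝ)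
    (hpA : ∀ α, pA α = ∑ l, pl l * ∑ β, ∑ γ, pc l α β γ)
    (hpB : ∀ β, pB β = ∑ l, pl l * ∑ α, ∑ γ, pc l α β γ)
    (hpC : ∀ γ, pC γ = ∑ l, pl l * ∑ α, ∑ β, pc l α β γ)
    (ε₁ ε₂ : ℝ) (hε₁ : 0 < ε₁) (hε₁' : ε₁ ≤ 1) (hε₂ : 1 ≤ ε₂)
    (hlb : ∀ l α β γ, ε₁ * (pA α * pB β * pC γ) ≤ pc l α β γ)
    (hub : ∀ l α β γ, pc l α β γ ≤ ε₂ * (pA α * pB β * pC γ))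
    -- local response kernels: a = (a_B,a_C) from (β,γ), b = (b_A,b_C) from (α,γ),
    -- c = (c_A,c_B) from (α,β), Charlie deterministic
    (ra : B → C → Fin 2 → Fin 2 → ℝ) (rb : A → C → Fin 2 → Fin 2 → ℝ)
    (rc : A → B → Fin 2 → Fin 2 → ℝ)
    (hra0 : ∀ β γ aB aC, 0 ≤ ra β γ aB aC) (hra1 : ∀ β γ, ∑ aB, ∑ aC, ra β γ aB aC = 1)
    (hrb0 : ∀ α γ bA bC, 0 ≤ rb α γ bA bC) (hrb1 : ∀ α γ, ∑ bA, ∑ bC, rb α γ bA bC = 1)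
    (hrc0 : ∀ α β cA cB, rc α β cA cB = 0 ∨ rc α β cA cB = 1)
    (hrc1 : ∀ α β, ∑ cA, ∑ cB, rc α β cA cB = 1)
    -- the full behaviour
    (P : Fin 2 → Fin 2 → Fin 2 → Fin 2 → Fin 2 → Fin 2 → ℝ)
    (hP : ∀ aB aC bA bC cA cB, P aB aC bA bC cA cB =
      ∑ l, ∑ α, ∑ β, ∑ γ, pl l * pc l α β γ *
        ra β γ aB aC * rb α γ bA bC * rc α β cA cB)
    -- consistency condition p(A_C = C_A ∧ B_C = C_B) = 1
    (hcons : ∑ aB, ∑ aC, ∑ bA, ∑ bC, ∑ cA, ∑ cB,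
      (if aC = cA ∧ bC = cB then P aB aC bA bC cA cB else 0) = 1)
    -- marginals of the effective inputs
    (pAC pBC : Fin 2 → ℝ)
    (hpAC : ∀ x, pAC x = ∑ aB, ∑ bA, ∑ bC, ∑ cA, ∑ cB, P aB x bA bC cA cB)
    (hpBC : ∀ y, pBC y = ∑ aB, ∑ aC, ∑ bA, ∑ cA, ∑ cB, P aB aC bA y cA cB)
    (mA mB : ℝ)
    (hmA : IsLeast {y : ℝ | 0 < y ∧ ∃ x, pAC x = y} mA)
    (hmB : IsLeast {y : ℝ | 0 < y ∧ ∃ x, pBC x = y} mB) :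
    ∃ F G : Fin 2 → Fin 2 → Λ × C → ℝ,
      (∀ aC g, (∀ aB, 0 ≤ F aB aC g) ∧ ∑ aB, F aB aC g = 1) ∧
      (∀ bC g, (∀ bA, 0 ≤ G bA bC g) ∧ ∑ bA, G bA bC g = 1) ∧
      ∀ aB bA aC bC, 0 < pAC aC → 0 < pBC bC →
        (ε₁ ^ 3 / ε₂ ^ 6) * mA * mB *
          (∑ l, ∑ γ, pl l * (∑ α, ∑ β, pc l α β γ) *
            F aB aC (l, γ) * G bA bC (l, γ))
          ≤ ∑ cA, ∑ cB, P aB aC bA bC cA cB := by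
  classical
  have hε₂0 : (0:ℝ) < ε₂ := lt_of_lt_of_le one_pos hε₂
  have hrc0' : ∀ α β cA cB, 0 ≤ rc α β cA cB := fun α β cA cB => by
    rcases hrc0 α β cA cB with h | h <;> rw [h] <;> norm_num
  -- nonnegativity / normalization of the marginals
  have hpA0 : ∀ α, 0 ≤ pA α := fun α => by
    rw [hpA]
    exact Finset.sum_nonneg fun l _ => mul_nonneg (hpl l)
      (Finset.sum_nonneg fun β _ => Finset.sum_nonneg fun γ _ => hpc _ _ _ _)
  have hpB0 : ∀ β, 0 ≤ pB β := fun β => by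
    rw [hpB]
    exact Finset.sum_nonneg fun l _ => mul_nonneg (hpl l)
      (Finset.sum_nonneg fun α _ => Finset.sum_nonneg fun γ _ => hpc _ _ _ _)
  have hpC0 : ∀ γ, 0 ≤ pC γ := fun γ => by
    rw [hpC]
    exact Finset.sum_nonneg fun l _ => mul_nonneg (hpl l)
      (Finset.sum_nonneg fun α _ => Finset.sum_nonneg fun β _ => hpc _ _ _ _)
  have hpA1 : ∑ α, pA α = 1 := by
    calc ∑ α, pA α = ∑ α, ∑ l, pl l * ∑ β, ∑ γ, pc l α β γ :=
          Finset.sum_congr rfl fun α _ => hpA α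
      _ = ∑ l, ∑ α, pl l * ∑ β, ∑ γ, pc l α β γ := Finset.sum_comm
      _ = ∑ l, pl l * (∑ α, ∑ β, ∑ γ, pc l α β γ) :=
          Finset.sum_congr rfl fun l _ => (Finset.mul_sum _ _ _).symm
      _ = 1 := by simp only [hpc1, mul_one]; exact hpl1
  have hpB1 : ∑ β, pB β = 1 := by
    calc ∑ β, pB β = ∑ β, ∑ l, pl l * ∑ α, ∑ γ, pc l α β γ :=
          Finset.sum_congr rfl fun β _ => hpB β
      _ = ∑ l, ∑ β, pl l * ∑ α, ∑ γ, pc l α β γ := Finset.sum_comm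
      _ = ∑ l, pl l * (∑ β, ∑ α, ∑ γ, pc l α β γ) :=
          Finset.sum_congr rfl fun l _ => (Finset.mul_sum _ _ _).symm
      _ = ∑ l, pl l * (∑ α, ∑ β, ∑ γ, pc l α β γ) := by
          refine Finset.sum_congr rfl fun l _ => ?_
          rw [Finset.sum_comm]
      _ = 1 := by simp only [hpc1, mul_one]; exact hpl1
  have hpC1 : ∑ γ, pC γ = 1 := by
    calc ∑ γ, pC γ = ∑ γ, ∑ l, pl l * ∑ α, ∑ β, pc l α β γ :=
          Finset.sum_congr rfl fun γ _ => hpC γ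
      _ = ∑ l, ∑ γ, pl l * ∑ α, ∑ β, pc l α β γ := Finset.sum_comm
      _ = ∑ l, pl l * (∑ γ, ∑ α, ∑ β, pc l α β γ) :=
          Finset.sum_congr rfl fun l _ => (Finset.mul_sum _ _ _).symm
      _ = ∑ l, pl l * (∑ α, ∑ β, ∑ γ, pc l α β γ) := by
          refine Finset.sum_congr rfl fun l _ => ?_
          rw [tl_comm3 (fun α β γ => pc l α β γ)]
          rw [Finset.sum_congr rfl fun γ (_ : γ ∈ Finset.univ) => Finset.sum_comm]
      _ = 1 := by simp only [hpc1, mul_one]; exact hpl1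
  -- existence of strictly positive points
  have hexl : ∃ l, 0 < pl l := by
    by_contra h
    push_neg at h
    have : ∑ l, pl l = 0 := Finset.sum_eq_zero fun l _ => le_antisymm (h l) (hpl l)
    rw [hpl1] at this; norm_num at this
  obtain ⟨l₀, hl₀⟩ := hexl
  have hexa : ∃ α, 0 < pA α := by
    by_contra h
    push_neg at h
    have : ∑ α, pA α = 0 := Finset.sum_eq_zero fun α _ => le_antisymm (h α) (hpA0 α)
    rw [hpA1] at this; norm_num at this
  obtain ⟨α₀, hα₀⟩ := hexa
  have hexb : ∃ β, 0 < pB β := by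
    by_contra h
    push_neg at h
    have : ∑ β, pB β = 0 := Finset.sum_eq_zero fun β _ => le_antisymm (h β) (hpB0 β)
    rw [hpB1] at this; norm_num at this
  obtain ⟨β₀, hβ₀⟩ := hexb
  -- deterministic Charlie outputs: choice of the value taken
  have hrcex : ∀ α β, ∃ q : Fin 2 × Fin 2, rc α β q.1 q.2 = 1 := by
    intro α β
    by_contra h
    push_neg at h
    have hz : ∀ q : Fin 2 × Fin 2, rc α β q.1 q.2 = 0 :=
      fun q => (hrc0 α β q.1 q.2).resolve_right (h q)
    have : ∑ cA, ∑ cB, rc α β cA cB = 0 :=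
      Finset.sum_eq_zero fun cA _ => Finset.sum_eq_zero fun cB _ => hz (cA, cB)
    rw [hrc1] at this; norm_num at this
  set cc : B → Fin 2 × Fin 2 := fun β => Classical.choose (hrcex α₀ β) with hccdef
  have hcc : ∀ β, rc α₀ β (cc β).1 (cc β).2 = 1 := fun β => Classical.choose_spec (hrcex α₀ β)
  set dd : A → Fin 2 × Fin 2 := fun α => Classical.choose (hrcex α β₀) with hdddef
  have hdd : ∀ α, rc α β₀ (dd α).1 (dd α).2 = 1 := fun α => Classical.choose_spec (hrcex α β₀)
  -- existence of positive response values
  have hraex : ∀ β γ, ∃ q : Fin 2 × Fin 2, 0 < ra β γ q.1 q.2 := by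
    intro β γ
    by_contra h
    push_neg at h
    have : ∑ aB, ∑ aC, ra β γ aB aC = 0 :=
      Finset.sum_eq_zero fun aB _ => Finset.sum_eq_zero fun aC _ =>
        le_antisymm (h (aB, aC)) (hra0 _ _ _ _)
    rw [hra1] at this; norm_num at this
  have hrbex : ∀ α γ, ∃ q : Fin 2 × Fin 2, 0 < rb α γ q.1 q.2 := by
    intro α γ
    by_contra h
    push_neg at h
    have : ∑ bA, ∑ bC, rb α γ bA bC = 0 :=
      Finset.sum_eq_zero fun bA _ => Finset.sum_eq_zero fun bC _ =>
        le_antisymm (h (bA, bC)) (hrb0 _ _ _ _)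
    rw [hrb1] at this; norm_num at this
  -- flattened form of P
  have hPflat : ∀ aB aC bA bC cA cB, P aB aC bA bC cA cB =
      ∑ x : Λ × A × B × C, pl x.1 * pc x.1 x.2.1 x.2.2.1 x.2.2.2 *
        ra x.2.2.1 x.2.2.2 aB aC * rb x.2.1 x.2.2.2 bA bC * rc x.2.1 x.2.2.1 cA cB := by
    intro aB aC bA bC cA cB
    rw [hP]
    exact tl_flat4 _
  have hterm0 : ∀ (x : Λ × A × B × C) (aB aC bA bC cA cB : Fin 2),
      0 ≤ pl x.1 * pc x.1 x.2.1 x.2.2.1 x.2.2.2 *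
        ra x.2.2.1 x.2.2.2 aB aC * rb x.2.1 x.2.2.2 bA bC * rc x.2.1 x.2.2.1 cA cB :=
    fun x aB aC bA bC cA cB =>
      mul_nonneg (mul_nonneg (mul_nonneg (mul_nonneg (hpl _) (hpc _ _ _ _))
        (hra0 _ _ _ _)) (hrb0 _ _ _ _)) (hrc0' _ _ _ _)
  have hP0 : ∀ aB aC bA bC cA cB, 0 ≤ P aB aC bA bC cA cB := by
    intro aB aC bA bC cA cB
    rw [hPflat]
    exact Finset.sum_nonneg fun x _ => hterm0 x _ _ _ _ _ _
  -- total sum of P equals 1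
  have htotflat : ∑ y : Fin 2 × Fin 2 × Fin 2 × Fin 2 × Fin 2 × Fin 2,
      P y.1 y.2.1 y.2.2.1 y.2.2.2.1 y.2.2.2.2.1 y.2.2.2.2.2 = 1 := by
    calc ∑ y : Fin 2 × Fin 2 × Fin 2 × Fin 2 × Fin 2 × Fin 2,
        P y.1 y.2.1 y.2.2.1 y.2.2.2.1 y.2.2.2.2.1 y.2.2.2.2.2
        = ∑ y : Fin 2 × Fin 2 × Fin 2 × Fin 2 × Fin 2 × Fin 2,
            ∑ x : Λ × A × B × C, pl x.1 * pc x.1 x.2.1 x.2.2.1 x.2.2.2 *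
              ra x.2.2.1 x.2.2.2 y.1 y.2.1 * rb x.2.1 x.2.2.2 y.2.2.1 y.2.2.2.1 *
              rc x.2.1 x.2.2.1 y.2.2.2.2.1 y.2.2.2.2.2 :=
          Finset.sum_congr rfl fun y _ => hPflat _ _ _ _ _ _
      _ = ∑ x : Λ × A × B × C, ∑ y : Fin 2 × Fin 2 × Fin 2 × Fin 2 × Fin 2 × Fin 2,
            pl x.1 * pc x.1 x.2.1 x.2.2.1 x.2.2.2 *
              ra x.2.2.1 x.2.2.2 y.1 y.2.1 * rb x.2.1 x.2.2.2 y.2.2.1 y.2.2.2.1 *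
              rc x.2.1 x.2.2.1 y.2.2.2.2.1 y.2.2.2.2.2 := Finset.sum_comm
      _ = ∑ x : Λ × A × B × C, pl x.1 * pc x.1 x.2.1 x.2.2.1 x.2.2.2 := by
          refine Finset.sum_congr rfl fun x _ => ?_
          rw [← tl_flat6 (fun aB aC bA bC cA cB => pl x.1 * pc x.1 x.2.1 x.2.2.1 x.2.2.2 *
              ra x.2.2.1 x.2.2.2 aB aC * rb x.2.1 x.2.2.2 bA bC * rc x.2.1 x.2.2.1 cA cB)]
          exact tl_perx6 _ _ _ _ (hra1 _ _) (hrb1 _ _) (hrc1 _ _)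
      _ = ∑ l, ∑ α, ∑ β, ∑ γ, pl l * pc l α β γ :=
          (tl_flat4 (fun l α β γ => pl l * pc l α β γ)).symm
      _ = ∑ l, pl l * (∑ α, ∑ β, ∑ γ, pc l α β γ) := by
          refine Finset.sum_congr rfl fun l _ => ?_
          rw [Finset.mul_sum]
          refine Finset.sum_congr rfl fun α _ => ?_
          rw [Finset.mul_sum]
          refine Finset.sum_congr rfl fun β _ => ?_
          rw [Finset.mul_sum]
      _ = 1 := by simp only [hpc1, mul_one]; exact hpl1
  -- every inconsistent term of P vanishes
  have hconsflat : ∑ y : Fin 2 × Fin 2 × Fin 2 × Fin 2 × Fin 2 × Fin 2,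
      (if y.2.1 = y.2.2.2.2.1 ∧ y.2.2.2.1 = y.2.2.2.2.2 then
        P y.1 y.2.1 y.2.2.1 y.2.2.2.1 y.2.2.2.2.1 y.2.2.2.2.2 else 0) = 1 :=
    (tl_flat6 _).symm.trans hcons
  have hbadzero : ∀ y : Fin 2 × Fin 2 × Fin 2 × Fin 2 × Fin 2 × Fin 2,
      ¬(y.2.1 = y.2.2.2.2.1 ∧ y.2.2.2.1 = y.2.2.2.2.2) →
      P y.1 y.2.1 y.2.2.1 y.2.2.2.1 y.2.2.2.2.1 y.2.2.2.2.2 = 0 := by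
    have hsplit : ∑ y : Fin 2 × Fin 2 × Fin 2 × Fin 2 × Fin 2 × Fin 2,
        (if y.2.1 = y.2.2.2.2.1 ∧ y.2.2.2.1 = y.2.2.2.2.2 then 0 else
          P y.1 y.2.1 y.2.2.1 y.2.2.2.1 y.2.2.2.2.1 y.2.2.2.2.2) = 0 := by
      have h1 : ∀ y : Fin 2 × Fin 2 × Fin 2 × Fin 2 × Fin 2 × Fin 2,
          P y.1 y.2.1 y.2.2.1 y.2.2.2.1 y.2.2.2.2.1 y.2.2.2.2.2 =
          (if y.2.1 = y.2.2.2.2.1 ∧ y.2.2.2.1 = y.2.2.2.2.2 then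
            P y.1 y.2.1 y.2.2.1 y.2.2.2.1 y.2.2.2.2.1 y.2.2.2.2.2 else 0) +
          (if y.2.1 = y.2.2.2.2.1 ∧ y.2.2.2.1 = y.2.2.2.2.2 then 0 else
            P y.1 y.2.1 y.2.2.1 y.2.2.2.1 y.2.2.2.2.1 y.2.2.2.2.2) := by
        intro y; by_cases h : y.2.1 = y.2.2.2.2.1 ∧ y.2.2.2.1 = y.2.2.2.2.2 <;> simp [h]
      have h2 := htotflat
      rw [Finset.sum_congr rfl fun y (_ : y ∈ Finset.univ) => h1 y,
        Finset.sum_add_distrib, hconsflat] at h2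
      linarith
    intro y hy
    have h3 := (Finset.sum_eq_zero_iff_of_nonneg (fun y _ => by
      split
      · exact le_rfl
      · exact hP0 _ _ _ _ _ _)).mp hsplit y (Finset.mem_univ y)
    rw [if_neg hy] at h3
    exact h3
  have hzero : ∀ aB aC bA bC cA cB, ¬(aC = cA ∧ bC = cB) → ∀ l α β γ,
      pl l * pc l α β γ * ra β γ aB aC * rb α γ bA bC * rc α β cA cB = 0 := by
    intro aB aC bA bC cA cB hcond l α β γ
    have hPz : P aB aC bA bC cA cB = 0 := hbadzero (aB, aC, bA, bC, cA, cB) hcond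
    rw [hPflat] at hPz
    exact (Finset.sum_eq_zero_iff_of_nonneg
      (fun x _ => hterm0 x aB aC bA bC cA cB)).mp hPz (l, α, β, γ) (Finset.mem_univ _)
  -- positivity of pc on the support
  have hpcpos : ∀ l α β γ, 0 < pA α → 0 < pB β → 0 < pC γ → 0 < pc l α β γ :=
    fun l α β γ ha hb hc =>
      lt_of_lt_of_le (by positivity) (hlb l α β γ)
  -- support structure of ra
  have hra_supp : ∀ β γ, 0 < pB β → 0 < pC γ → ∀ aB aC, aC ≠ (cc β).1 →
      ra β γ aB aC = 0 := by
    intro β γ hβ hγ aB aC hne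
    obtain ⟨q, hq⟩ := hrbex α₀ γ
    have hz := hzero aB aC q.1 q.2 (cc β).1 (cc β).2 (fun h => hne h.1) l₀ α₀ β γ
    rcases (hra0 β γ aB aC).lt_or_eq with hpos | heq
    · exfalso
      have hp : 0 < pl l₀ * pc l₀ α₀ β γ * ra β γ aB aC * rb α₀ γ q.1 q.2 *
          rc α₀ β (cc β).1 (cc β).2 := by
        have h1 : (0:ℝ) < rc α₀ β (cc β).1 (cc β).2 := by rw [hcc β]; norm_num
        exact mul_pos (mul_pos (mul_pos (mul_pos hl₀ (hpcpos l₀ α₀ β γ hα₀ hβ hγ)) hpos) hq) h1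
      linarith
    · exact heq.symm
  have hrb_supp : ∀ α γ, 0 < pA α → 0 < pC γ → ∀ bA bC, bC ≠ (dd α).2 →
      rb α γ bA bC = 0 := by
    intro α γ hα hγ bA bC hne
    obtain ⟨q, hq⟩ := hraex β₀ γ
    have hz := hzero q.1 q.2 bA bC (dd α).1 (dd α).2 (fun h => hne h.2) l₀ α β₀ γ
    rcases (hrb0 α γ bA bC).lt_or_eq with hpos | heq
    · exfalso
      have hp : 0 < pl l₀ * pc l₀ α β₀ γ * ra β₀ γ q.1 q.2 * rb α γ bA bC *
          rc α β₀ (dd α).1 (dd α).2 := by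
        have h1 : (0:ℝ) < rc α β₀ (dd α).1 (dd α).2 := by rw [hdd α]; norm_num
        exact mul_pos (mul_pos (mul_pos (mul_pos hl₀ (hpcpos l₀ α β₀ γ hα hβ₀ hγ)) hq) hpos) h1
      linarith
    · exact heq.symm
  -- indicator structure of the marginals of ra, rb
  have hsA : ∀ β γ, 0 < pB β → 0 < pC γ → ∀ aC,
      (∑ aB, ra β γ aB aC) = if aC = (cc β).1 then 1 else 0 := by
    intro β γ hβ hγ aC
    by_cases h : aC = (cc β).1
    · rw [if_pos h]
      have h2 : ∀ aC', aC' ≠ (cc β).1 → ∑ aB, ra β γ aB aC' = 0 := fun aC' h' =>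
        Finset.sum_eq_zero fun aB _ => hra_supp β γ hβ hγ aB aC' h'
      have h3 : ∑ aC', ∑ aB, ra β γ aB aC' = 1 := by
        rw [Finset.sum_comm]; exact hra1 β γ
      rw [← h3]
      exact (Finset.sum_eq_single_of_mem aC (Finset.mem_univ aC)
        (fun b _ hb => h2 b (fun hbc => hb (hbc.trans h.symm)))).symm
    · rw [if_neg h]
      exact Finset.sum_eq_zero fun aB _ => hra_supp β γ hβ hγ aB aC h
  have hsB : ∀ α γ, 0 < pA α → 0 < pC γ → ∀ bC,
      (∑ bA, rb α γ bA bC) = if bC = (dd α).2 then 1 else 0 := by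
    intro α γ hα hγ bC
    by_cases h : bC = (dd α).2
    · rw [if_pos h]
      have h2 : ∀ bC', bC' ≠ (dd α).2 → ∑ bA, rb α γ bA bC' = 0 := fun bC' h' =>
        Finset.sum_eq_zero fun bA _ => hrb_supp α γ hα hγ bA bC' h'
      have h3 : ∑ bC', ∑ bA, rb α γ bA bC' = 1 := by
        rw [Finset.sum_comm]; exact hrb1 α γ
      rw [← h3]
      exact (Finset.sum_eq_single_of_mem bC (Finset.mem_univ bC)
        (fun b _ hb => h2 b (fun hbc => hb (hbc.trans h.symm)))).symm
    · rw [if_neg h]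
      exact Finset.sum_eq_zero fun bA _ => hrb_supp α γ hα hγ bA bC h
  -- effective indicator marginals
  have hW : ∀ aC : Fin 2, ∑ β, ∑ γ, pB β * pC γ * (∑ aB', ra β γ aB' aC)
      = ∑ β, pB β * (if aC = (cc β).1 then 1 else 0) := by
    intro aC
    refine Finset.sum_congr rfl fun β _ => ?_
    rcases (hpB0 β).lt_or_eq with hβ | hβ
    · calc ∑ γ, pB β * pC γ * (∑ aB', ra β γ aB' aC)
          = ∑ γ, (pB β * (if aC = (cc β).1 then 1 else 0)) * pC γ := by
            refine Finset.sum_congr rfl fun γ _ => ?_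
            rcases (hpC0 γ).lt_or_eq with hγ | hγ
            · rw [hsA β γ hβ hγ aC]; ring
            · rw [← hγ]; ring
        _ = (pB β * (if aC = (cc β).1 then 1 else 0)) * ∑ γ, pC γ :=
            (Finset.mul_sum _ _ _).symm
        _ = pB β * (if aC = (cc β).1 then 1 else 0) := by rw [hpC1, mul_one]
    · rw [← hβ]; simp
  have hWB2 : ∀ (bC : Fin 2) (α : A), ∑ γ, pA α * pC γ * (∑ bA', rb α γ bA' bC)
      = pA α * (if bC = (dd α).2 then 1 else 0) := by
    intro bC α
    rcases (hpA0 α).lt_or_eq with hα | hα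
    · calc ∑ γ, pA α * pC γ * (∑ bA', rb α γ bA' bC)
          = ∑ γ, (pA α * (if bC = (dd α).2 then 1 else 0)) * pC γ := by
            refine Finset.sum_congr rfl fun γ _ => ?_
            rcases (hpC0 γ).lt_or_eq with hγ | hγ
            · rw [hsB α γ hα hγ bC]; ring
            · rw [← hγ]; ring
        _ = (pA α * (if bC = (dd α).2 then 1 else 0)) * ∑ γ, pC γ :=
            (Finset.mul_sum _ _ _).symm
        _ = pA α * (if bC = (dd α).2 then 1 else 0) := by rw [hpC1, mul_one]
    · rw [← hα]; simp
  -- upper bound on the effective marginal pAC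
  have hpACle : ∀ aC, pAC aC ≤ ε₂ * ∑ β, pB β * (if aC = (cc β).1 then 1 else 0) := by
    intro aC
    have h1 : pAC aC = ∑ x : Λ × A × B × C, pl x.1 * pc x.1 x.2.1 x.2.2.1 x.2.2.2 *
        ∑ aB', ra x.2.2.1 x.2.2.2 aB' aC := by
      rw [hpAC]
      calc ∑ aB, ∑ bA, ∑ bC, ∑ cA, ∑ cB, P aB aC bA bC cA cB
          = ∑ aB, ∑ bA, ∑ bC, ∑ cA, ∑ cB, ∑ x : Λ × A × B × C,
              pl x.1 * pc x.1 x.2.1 x.2.2.1 x.2.2.2 * ra x.2.2.1 x.2.2.2 aB aC *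
              rb x.2.1 x.2.2.2 bA bC * rc x.2.1 x.2.2.1 cA cB := by
            refine Finset.sum_congr rfl fun aB _ => Finset.sum_congr rfl fun bA _ =>
              Finset.sum_congr rfl fun bC _ => Finset.sum_congr rfl fun cA _ =>
              Finset.sum_congr rfl fun cB _ => hPflat _ _ _ _ _ _
        _ = ∑ y : Fin 2 × Fin 2 × Fin 2 × Fin 2 × Fin 2, ∑ x : Λ × A × B × C,
              pl x.1 * pc x.1 x.2.1 x.2.2.1 x.2.2.2 * ra x.2.2.1 x.2.2.2 y.1 aC *
              rb x.2.1 x.2.2.2 y.2.1 y.2.2.1 * rc x.2.1 x.2.2.1 y.2.2.2.1 y.2.2.2.2 := by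
            exact tl_flat5 (fun aB bA bC cA cB => ∑ x : Λ × A × B × C,
              pl x.1 * pc x.1 x.2.1 x.2.2.1 x.2.2.2 * ra x.2.2.1 x.2.2.2 aB aC *
              rb x.2.1 x.2.2.2 bA bC * rc x.2.1 x.2.2.1 cA cB)
        _ = ∑ x : Λ × A × B × C, ∑ y : Fin 2 × Fin 2 × Fin 2 × Fin 2 × Fin 2,
              pl x.1 * pc x.1 x.2.1 x.2.2.1 x.2.2.2 * ra x.2.2.1 x.2.2.2 y.1 aC *
              rb x.2.1 x.2.2.2 y.2.1 y.2.2.1 * rc x.2.1 x.2.2.1 y.2.2.2.1 y.2.2.2.2 :=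
            Finset.sum_comm
        _ = ∑ x : Λ × A × B × C, pl x.1 * pc x.1 x.2.1 x.2.2.1 x.2.2.2 *
              ∑ aB', ra x.2.2.1 x.2.2.2 aB' aC := by
            refine Finset.sum_congr rfl fun x _ => ?_
            rw [← tl_flat5 (fun aB bA bC cA cB =>
              pl x.1 * pc x.1 x.2.1 x.2.2.1 x.2.2.2 * ra x.2.2.1 x.2.2.2 aB aC *
              rb x.2.1 x.2.2.2 bA bC * rc x.2.1 x.2.2.1 cA cB)]
            exact tl_perx5A _ aC _ _ _ (hrb1 _ _) (hrc1 _ _)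
    rw [h1]
    calc ∑ x : Λ × A × B × C, pl x.1 * pc x.1 x.2.1 x.2.2.1 x.2.2.2 *
            ∑ aB', ra x.2.2.1 x.2.2.2 aB' aC
        ≤ ∑ x : Λ × A × B × C, pl x.1 * (ε₂ * (pA x.2.1 * pB x.2.2.1 * pC x.2.2.2)) *
            ∑ aB', ra x.2.2.1 x.2.2.2 aB' aC :=
          Finset.sum_le_sum fun x _ => mul_le_mul_of_nonneg_right
            (mul_le_mul_of_nonneg_left (hub x.1 x.2.1 x.2.2.1 x.2.2.2) (hpl x.1))
            (Finset.sum_nonneg fun aB' _ => hra0 _ _ _ _)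
      _ = ∑ l, ∑ α, ∑ β, ∑ γ, pl l * (ε₂ * (pA α * pB β * pC γ)) *
            ∑ aB', ra β γ aB' aC :=
          (tl_flat4 (fun l α β γ => pl l * (ε₂ * (pA α * pB β * pC γ)) *
            ∑ aB', ra β γ aB' aC)).symm
      _ = ∑ l, ∑ α, (pl l * pA α * ε₂) *
            ∑ β, ∑ γ, pB β * pC γ * ∑ aB', ra β γ aB' aC := by
          refine Finset.sum_congr rfl fun l _ => Finset.sum_congr rfl fun α _ => ?_
          calc ∑ β, ∑ γ, pl l * (ε₂ * (pA α * pB β * pC γ)) * ∑ aB', ra β γ aB' aC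
              = ∑ β, ∑ γ, (pl l * pA α * ε₂) * (pB β * pC γ * ∑ aB', ra β γ aB' aC) :=
                Finset.sum_congr rfl fun β _ => Finset.sum_congr rfl fun γ _ => by ring
            _ = (pl l * pA α * ε₂) * ∑ β, ∑ γ, pB β * pC γ * ∑ aB', ra β γ aB' aC := by
                rw [Finset.mul_sum]
                exact Finset.sum_congr rfl fun β _ => (Finset.mul_sum _ _ _).symm
      _ = ∑ l, ∑ α, (pl l * pA α * ε₂) *
            ∑ β, pB β * (if aC = (cc β).1 then 1 else 0) := by
          simp only [hW aC]
      _ = ε₂ * ∑ β, pB β * (if aC = (cc β).1 then 1 else 0) := by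
          calc ∑ l, ∑ α, (pl l * pA α * ε₂) *
                ∑ β, pB β * (if aC = (cc β).1 then 1 else 0)
              = ∑ l, (pl l * ε₂ * ∑ β, pB β * (if aC = (cc β).1 then 1 else 0)) *
                  ∑ α, pA α := by
                refine Finset.sum_congr rfl fun l _ => ?_
                rw [Finset.mul_sum]
                exact Finset.sum_congr rfl fun α _ => by ring
            _ = ∑ l, pl l * (ε₂ * ∑ β, pB β * (if aC = (cc β).1 then 1 else 0)) := by
                rw [hpA1]
                exact Finset.sum_congr rfl fun l _ => by ring
            _ = (∑ l, pl l) * (ε₂ * ∑ β, pB β * (if aC = (cc β).1 then 1 else 0)) :=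
                (Finset.sum_mul _ _ _).symm
            _ = ε₂ * ∑ β, pB β * (if aC = (cc β).1 then 1 else 0) := by
                rw [hpl1, one_mul]
  -- upper bound on the effective marginal pBC
  have hpBCle : ∀ bC, pBC bC ≤ ε₂ * ∑ α, pA α * (if bC = (dd α).2 then 1 else 0) := by
    intro bC
    have h1 : pBC bC = ∑ x : Λ × A × B × C, pl x.1 * pc x.1 x.2.1 x.2.2.1 x.2.2.2 *
        ∑ bA', rb x.2.1 x.2.2.2 bA' bC := by
      rw [hpBC]
      calc ∑ aB, ∑ aC, ∑ bA, ∑ cA, ∑ cB, P aB aC bA bC cA cB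
          = ∑ aB, ∑ aC, ∑ bA, ∑ cA, ∑ cB, ∑ x : Λ × A × B × C,
              pl x.1 * pc x.1 x.2.1 x.2.2.1 x.2.2.2 * ra x.2.2.1 x.2.2.2 aB aC *
              rb x.2.1 x.2.2.2 bA bC * rc x.2.1 x.2.2.1 cA cB := by
            refine Finset.sum_congr rfl fun aB _ => Finset.sum_congr rfl fun aC _ =>
              Finset.sum_congr rfl fun bA _ => Finset.sum_congr rfl fun cA _ =>
              Finset.sum_congr rfl fun cB _ => hPflat _ _ _ _ _ _
        _ = ∑ y : Fin 2 × Fin 2 × Fin 2 × Fin 2 × Fin 2, ∑ x : Λ × A × B × C,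
              pl x.1 * pc x.1 x.2.1 x.2.2.1 x.2.2.2 * ra x.2.2.1 x.2.2.2 y.1 y.2.1 *
              rb x.2.1 x.2.2.2 y.2.2.1 bC * rc x.2.1 x.2.2.1 y.2.2.2.1 y.2.2.2.2 := by
            exact tl_flat5 (fun aB aC bA cA cB => ∑ x : Λ × A × B × C,
              pl x.1 * pc x.1 x.2.1 x.2.2.1 x.2.2.2 * ra x.2.2.1 x.2.2.2 aB aC *
              rb x.2.1 x.2.2.2 bA bC * rc x.2.1 x.2.2.1 cA cB)
        _ = ∑ x : Λ × A × B × C, ∑ y : Fin 2 × Fin 2 × Fin 2 × Fin 2 × Fin 2,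
              pl x.1 * pc x.1 x.2.1 x.2.2.1 x.2.2.2 * ra x.2.2.1 x.2.2.2 y.1 y.2.1 *
              rb x.2.1 x.2.2.2 y.2.2.1 bC * rc x.2.1 x.2.2.1 y.2.2.2.1 y.2.2.2.2 :=
            Finset.sum_comm
        _ = ∑ x : Λ × A × B × C, pl x.1 * pc x.1 x.2.1 x.2.2.1 x.2.2.2 *
              ∑ bA', rb x.2.1 x.2.2.2 bA' bC := by
            refine Finset.sum_congr rfl fun x _ => ?_
            rw [← tl_flat5 (fun aB aC bA cA cB =>
              pl x.1 * pc x.1 x.2.1 x.2.2.1 x.2.2.2 * ra x.2.2.1 x.2.2.2 aB aC *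
              rb x.2.1 x.2.2.2 bA bC * rc x.2.1 x.2.2.1 cA cB)]
            exact tl_perx5B _ bC _ _ _ (hra1 _ _) (hrc1 _ _)
    rw [h1]
    calc ∑ x : Λ × A × B × C, pl x.1 * pc x.1 x.2.1 x.2.2.1 x.2.2.2 *
            ∑ bA', rb x.2.1 x.2.2.2 bA' bC
        ≤ ∑ x : Λ × A × B × C, pl x.1 * (ε₂ * (pA x.2.1 * pB x.2.2.1 * pC x.2.2.2)) *
            ∑ bA', rb x.2.1 x.2.2.2 bA' bC :=
          Finset.sum_le_sum fun x _ => mul_le_mul_of_nonneg_right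
            (mul_le_mul_of_nonneg_left (hub x.1 x.2.1 x.2.2.1 x.2.2.2) (hpl x.1))
            (Finset.sum_nonneg fun bA' _ => hrb0 _ _ _ _)
      _ = ∑ l, ∑ α, ∑ β, ∑ γ, pl l * (ε₂ * (pA α * pB β * pC γ)) *
            ∑ bA', rb α γ bA' bC :=
          (tl_flat4 (fun l α β γ => pl l * (ε₂ * (pA α * pB β * pC γ)) *
            ∑ bA', rb α γ bA' bC)).symm
      _ = ∑ l, ∑ α, ∑ β, (pl l * ε₂ * pB β) *
            ∑ γ, pA α * pC γ * ∑ bA', rb α γ bA' bC := by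
          refine Finset.sum_congr rfl fun l _ => Finset.sum_congr rfl fun α _ =>
            Finset.sum_congr rfl fun β _ => ?_
          calc ∑ γ, pl l * (ε₂ * (pA α * pB β * pC γ)) * ∑ bA', rb α γ bA' bC
              = ∑ γ, (pl l * ε₂ * pB β) * (pA α * pC γ * ∑ bA', rb α γ bA' bC) :=
                Finset.sum_congr rfl fun γ _ => by ring
            _ = (pl l * ε₂ * pB β) * ∑ γ, pA α * pC γ * ∑ bA', rb α γ bA' bC :=
                (Finset.mul_sum _ _ _).symm
      _ = ∑ l, ∑ α, ∑ β, (pl l * ε₂ * pB β) *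
            (pA α * (if bC = (dd α).2 then 1 else 0)) := by
          simp only [hWB2 bC]
      _ = ∑ l, ∑ α, (pl l * ε₂ * (pA α * (if bC = (dd α).2 then 1 else 0))) *
            ∑ β, pB β := by
          refine Finset.sum_congr rfl fun l _ => Finset.sum_congr rfl fun α _ => ?_
          rw [Finset.mul_sum]
          exact Finset.sum_congr rfl fun β _ => by ring
      _ = ∑ l, ∑ α, pl l * ε₂ * (pA α * (if bC = (dd α).2 then 1 else 0)) := by
          simp only [hpB1, mul_one]
      _ = ε₂ * ∑ α, pA α * (if bC = (dd α).2 then 1 else 0) := by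
          calc ∑ l, ∑ α, pl l * ε₂ * (pA α * (if bC = (dd α).2 then 1 else 0))
              = ∑ l, (pl l * ε₂) * ∑ α, pA α * (if bC = (dd α).2 then 1 else 0) := by
                refine Finset.sum_congr rfl fun l _ => ?_
                rw [Finset.mul_sum]
            _ = ∑ l, pl l * (ε₂ * ∑ α, pA α * (if bC = (dd α).2 then 1 else 0)) :=
                Finset.sum_congr rfl fun l _ => by ring
            _ = (∑ l, pl l) * (ε₂ * ∑ α, pA α * (if bC = (dd α).2 then 1 else 0)) :=
                (Finset.sum_mul _ _ _).symm
            _ = ε₂ * ∑ α, pA α * (if bC = (dd α).2 then 1 else 0) := by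
                rw [hpl1, one_mul]
  -- the response distributions
  refine ⟨fun aB aC g => tlResp pB ra aB aC g.2, fun bA bC g => tlResp pA rb bA bC g.2,
    ?_, ?_, ?_⟩
  · intro aC g
    exact ⟨fun aB => tlResp_nonneg pB ra hpB0 hra0 aB aC g.2, tlResp_sum pB ra aC g.2⟩
  · intro bC g
    exact ⟨fun bA => tlResp_nonneg pA rb hpA0 hrb0 bA bC g.2, tlResp_sum pA rb bC g.2⟩
  intro aB bA aC bC haC hbC
  dsimp only
  have hF0 : ∀ γ, 0 ≤ tlResp pB ra aB aC γ := fun γ => tlResp_nonneg pB ra hpB0 hra0 aB aC γ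
  have hG0 : ∀ γ, 0 ≤ tlResp pA rb bA bC γ := fun γ => tlResp_nonneg pA rb hpA0 hrb0 bA bC γ
  have hmA0 : 0 < mA := hmA.1.1
  have hmB0 : 0 < mB := hmB.1.1
  have hQAge : mA ≤ ε₂ * ∑ β, pB β * (if aC = (cc β).1 then 1 else 0) :=
    le_trans (hmA.2 ⟨haC, aC, rfl⟩) (hpACle aC)
  have hQBge : mB ≤ ε₂ * ∑ α, pA α * (if bC = (dd α).2 then 1 else 0) :=
    le_trans (hmB.2 ⟨hbC, bC, rfl⟩) (hpBCle bC)
  have hQApos : 0 < ∑ β, pB β * (if aC = (cc β).1 then 1 else 0) := by nlinarith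
  have hQBpos : 0 < ∑ α, pA α * (if bC = (dd α).2 then 1 else 0) := by nlinarith
  -- the observed probability, flattened
  have hEq1 : ∑ cA, ∑ cB, P aB aC bA bC cA cB =
      ∑ x : Λ × A × B × C, pl x.1 * pc x.1 x.2.1 x.2.2.1 x.2.2.2 *
        ra x.2.2.1 x.2.2.2 aB aC * rb x.2.1 x.2.2.2 bA bC := by
    calc ∑ cA, ∑ cB, P aB aC bA bC cA cB
        = ∑ cA, ∑ cB, ∑ x : Λ × A × B × C,
            pl x.1 * pc x.1 x.2.1 x.2.2.1 x.2.2.2 * ra x.2.2.1 x.2.2.2 aB aC *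
            rb x.2.1 x.2.2.2 bA bC * rc x.2.1 x.2.2.1 cA cB :=
          Finset.sum_congr rfl fun cA _ => Finset.sum_congr rfl fun cB _ =>
            hPflat _ _ _ _ _ _
      _ = ∑ y : Fin 2 × Fin 2, ∑ x : Λ × A × B × C,
            pl x.1 * pc x.1 x.2.1 x.2.2.1 x.2.2.2 * ra x.2.2.1 x.2.2.2 aB aC *
            rb x.2.1 x.2.2.2 bA bC * rc x.2.1 x.2.2.1 y.1 y.2 :=
          tl_flat2 (fun cA cB => ∑ x : Λ × A × B × C,
            pl x.1 * pc x.1 x.2.1 x.2.2.1 x.2.2.2 * ra x.2.2.1 x.2.2.2 aB aC *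
            rb x.2.1 x.2.2.2 bA bC * rc x.2.1 x.2.2.1 cA cB)
      _ = ∑ x : Λ × A × B × C, ∑ y : Fin 2 × Fin 2,
            pl x.1 * pc x.1 x.2.1 x.2.2.1 x.2.2.2 * ra x.2.2.1 x.2.2.2 aB aC *
            rb x.2.1 x.2.2.2 bA bC * rc x.2.1 x.2.2.1 y.1 y.2 := Finset.sum_comm
      _ = ∑ x : Λ × A × B × C, pl x.1 * pc x.1 x.2.1 x.2.2.1 x.2.2.2 *
            ra x.2.2.1 x.2.2.2 aB aC * rb x.2.1 x.2.2.2 bA bC := by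
          refine Finset.sum_congr rfl fun x _ => ?_
          rw [← tl_flat2 (fun cA cB =>
            pl x.1 * pc x.1 x.2.1 x.2.2.1 x.2.2.2 * ra x.2.2.1 x.2.2.2 aB aC *
            rb x.2.1 x.2.2.2 bA bC * rc x.2.1 x.2.2.1 cA cB)]
          exact tl_perx2 _ _ (hrc1 _ _)
  -- lower bound on the observed probability
  have hstepB : ∑ γ, (ε₁ * pC γ) * (∑ β, pB β * ra β γ aB aC) *
      (∑ α, pA α * rb α γ bA bC) ≤
      ∑ x : Λ × A × B × C, pl x.1 * pc x.1 x.2.1 x.2.2.1 x.2.2.2 *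
        ra x.2.2.1 x.2.2.2 aB aC * rb x.2.1 x.2.2.2 bA bC := by
    have hEB : ∑ x : Λ × A × B × C,
        pl x.1 * (ε₁ * (pA x.2.1 * pB x.2.2.1 * pC x.2.2.2)) *
          ra x.2.2.1 x.2.2.2 aB aC * rb x.2.1 x.2.2.2 bA bC =
        ∑ γ, (ε₁ * pC γ) * (∑ β, pB β * ra β γ aB aC) * (∑ α, pA α * rb α γ bA bC) := by
      calc ∑ x : Λ × A × B × C,
          pl x.1 * (ε₁ * (pA x.2.1 * pB x.2.2.1 * pC x.2.2.2)) *
            ra x.2.2.1 x.2.2.2 aB aC * rb x.2.1 x.2.2.2 bA bC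
          = ∑ l, ∑ α, ∑ β, ∑ γ, pl l * (ε₁ * (pA α * pB β * pC γ)) *
              ra β γ aB aC * rb α γ bA bC :=
            (tl_flat4 (fun l α β γ => pl l * (ε₁ * (pA α * pB β * pC γ)) *
              ra β γ aB aC * rb α γ bA bC)).symm
        _ = ∑ l, pl l * ∑ γ, (ε₁ * pC γ) * (∑ β, pB β * ra β γ aB aC) *
              (∑ α, pA α * rb α γ bA bC) := by
            refine Finset.sum_congr rfl fun l _ => ?_
            calc ∑ α, ∑ β, ∑ γ, pl l * (ε₁ * (pA α * pB β * pC γ)) *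
                  ra β γ aB aC * rb α γ bA bC
                = ∑ α, ∑ β, ∑ γ, (pA α * rb α γ bA bC) * (pB β * ra β γ aB aC) *
                    (pl l * (ε₁ * pC γ)) :=
                  Finset.sum_congr rfl fun α _ => Finset.sum_congr rfl fun β _ =>
                    Finset.sum_congr rfl fun γ _ => by ring
              _ = ∑ γ, (pl l * (ε₁ * pC γ)) * (∑ β, pB β * ra β γ aB aC) *
                    (∑ α, pA α * rb α γ bA bC) := tl_factor3 _ _ _
              _ = pl l * ∑ γ, (ε₁ * pC γ) * (∑ β, pB β * ra β γ aB aC) *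
                    (∑ α, pA α * rb α γ bA bC) := by
                  rw [Finset.mul_sum]
                  exact Finset.sum_congr rfl fun γ _ => by ring
        _ = (∑ l, pl l) * ∑ γ, (ε₁ * pC γ) * (∑ β, pB β * ra β γ aB aC) *
              (∑ α, pA α * rb α γ bA bC) := (Finset.sum_mul _ _ _).symm
        _ = ∑ γ, (ε₁ * pC γ) * (∑ β, pB β * ra β γ aB aC) *
              (∑ α, pA α * rb α γ bA bC) := by rw [hpl1, one_mul]
    rw [← hEB]
    exact Finset.sum_le_sum fun x _ => mul_le_mul_of_nonneg_right
      (mul_le_mul_of_nonneg_right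
        (mul_le_mul_of_nonneg_left (hlb x.1 x.2.1 x.2.2.1 x.2.2.2) (hpl x.1))
        (hra0 _ _ _ _)) (hrb0 _ _ _ _)
  -- upper bound on the trilocal expression
  have hstepC : (∑ l, ∑ γ, pl l * (∑ α, ∑ β, pc l α β γ) *
      tlResp pB ra aB aC γ * tlResp pA rb bA bC γ) ≤
      ε₂ * ∑ γ, pC γ * tlResp pB ra aB aC γ * tlResp pA rb bA bC γ := by
    have hQle : ∀ l γ, ∑ α, ∑ β, pc l α β γ ≤ ε₂ * pC γ := by
      intro l γ
      calc ∑ α, ∑ β, pc l α β γ ≤ ∑ α, ∑ β, ε₂ * (pA α * pB β * pC γ) :=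
            Finset.sum_le_sum fun α _ => Finset.sum_le_sum fun β _ => hub l α β γ
        _ = ∑ α, (ε₂ * pC γ * pA α) * ∑ β, pB β := by
            refine Finset.sum_congr rfl fun α _ => ?_
            rw [Finset.mul_sum]
            exact Finset.sum_congr rfl fun β _ => by ring
        _ = ∑ α, (ε₂ * pC γ) * pA α := by
            simp only [hpB1, mul_one]
        _ = (ε₂ * pC γ) * ∑ α, pA α := (Finset.mul_sum _ _ _).symm
        _ = ε₂ * pC γ := by rw [hpA1, mul_one]
    calc ∑ l, ∑ γ, pl l * (∑ α, ∑ β, pc l α β γ) *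
          tlResp pB ra aB aC γ * tlResp pA rb bA bC γ
        ≤ ∑ l, ∑ γ, pl l * (ε₂ * pC γ) *
            tlResp pB ra aB aC γ * tlResp pA rb bA bC γ :=
          Finset.sum_le_sum fun l _ => Finset.sum_le_sum fun γ _ =>
            mul_le_mul_of_nonneg_right (mul_le_mul_of_nonneg_right
              (mul_le_mul_of_nonneg_left (hQle l γ) (hpl l)) (hF0 γ)) (hG0 γ)
      _ = ∑ l, (pl l * ε₂) *
            ∑ γ, pC γ * tlResp pB ra aB aC γ * tlResp pA rb bA bC γ := by
          refine Finset.sum_congr rfl fun l _ => ?_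
          rw [Finset.mul_sum]
          exact Finset.sum_congr rfl fun γ _ => by ring
      _ = ∑ l, pl l *
            (ε₂ * ∑ γ, pC γ * tlResp pB ra aB aC γ * tlResp pA rb bA bC γ) :=
          Finset.sum_congr rfl fun l _ => by ring
      _ = (∑ l, pl l) *
            (ε₂ * ∑ γ, pC γ * tlResp pB ra aB aC γ * tlResp pA rb bA bC γ) :=
          (Finset.sum_mul _ _ _).symm
      _ = ε₂ * ∑ γ, pC γ * tlResp pB ra aB aC γ * tlResp pA rb bA bC γ := by
          rw [hpl1, one_mul]
  -- the γ-wise comparison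
  have hkey : ε₁ ^ 3 / ε₂ ^ 6 * mA * mB * ε₂ ≤
      ε₁ * ((∑ β, pB β * (if aC = (cc β).1 then 1 else 0)) *
        (∑ α, pA α * (if bC = (dd α).2 then 1 else 0))) := by
    rw [div_mul_eq_mul_div, div_mul_eq_mul_div, div_mul_eq_mul_div,
      div_le_iff₀ (by positivity : (0:ℝ) < ε₂ ^ 6)]
    calc ε₁ ^ 3 * mA * mB * ε₂
        = ε₁ ^ 3 * ε₂ * (mA * mB) := by ring
      _ ≤ ε₁ ^ 3 * ε₂ * ((ε₂ * ∑ β, pB β * (if aC = (cc β).1 then 1 else 0)) *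
            (ε₂ * ∑ α, pA α * (if bC = (dd α).2 then 1 else 0))) := by
          refine mul_le_mul_of_nonneg_left ?_ (by positivity)
          exact mul_le_mul hQAge hQBge hmB0.le (by positivity)
      _ = (ε₁ * ((∑ β, pB β * (if aC = (cc β).1 then 1 else 0)) *
            (∑ α, pA α * (if bC = (dd α).2 then 1 else 0)))) * (ε₁ ^ 2 * ε₂ ^ 3) := by
          ring
      _ ≤ (ε₁ * ((∑ β, pB β * (if aC = (cc β).1 then 1 else 0)) *
            (∑ α, pA α * (if bC = (dd α).2 then 1 else 0)))) * ε₂ ^ 6 := by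
          refine mul_le_mul_of_nonneg_left ?_
            (by positivity)
          have h1 : ε₁ ^ 2 ≤ 1 := by nlinarith
          have h2 : ε₂ ^ 3 ≤ ε₂ ^ 6 := pow_le_pow_right₀ hε₂ (by norm_num)
          calc ε₁ ^ 2 * ε₂ ^ 3 ≤ 1 * ε₂ ^ 3 :=
                mul_le_mul_of_nonneg_right h1 (by positivity)
            _ = ε₂ ^ 3 := one_mul _
            _ ≤ ε₂ ^ 6 := h2
  have hstepD : ε₁ ^ 3 / ε₂ ^ 6 * mA * mB *
      (ε₂ * ∑ γ, pC γ * tlResp pB ra aB aC γ * tlResp pA rb bA bC γ) ≤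
      ∑ γ, (ε₁ * pC γ) * (∑ β, pB β * ra β γ aB aC) * (∑ α, pA α * rb α γ bA bC) := by
    have hL : ε₁ ^ 3 / ε₂ ^ 6 * mA * mB *
        (ε₂ * ∑ γ, pC γ * tlResp pB ra aB aC γ * tlResp pA rb bA bC γ) =
        ∑ γ, (ε₁ ^ 3 / ε₂ ^ 6 * mA * mB * ε₂) *
          (pC γ * tlResp pB ra aB aC γ * tlResp pA rb bA bC γ) := by
      calc ε₁ ^ 3 / ε₂ ^ 6 * mA * mB *
          (ε₂ * ∑ γ, pC γ * tlResp pB ra aB aC γ * tlResp pA rb bA bC γ)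
          = (ε₁ ^ 3 / ε₂ ^ 6 * mA * mB * ε₂) *
            ∑ γ, pC γ * tlResp pB ra aB aC γ * tlResp pA rb bA bC γ := by ring
        _ = ∑ γ, (ε₁ ^ 3 / ε₂ ^ 6 * mA * mB * ε₂) *
            (pC γ * tlResp pB ra aB aC γ * tlResp pA rb bA bC γ) :=
          Finset.mul_sum _ _ _
    rw [hL]
    refine Finset.sum_le_sum fun γ _ => ?_
    rcases (hpC0 γ).lt_or_eq with hγ | hγ
    · have hRA2γ : ∑ aB', ∑ β, pB β * ra β γ aB' aC =
          ∑ β, pB β * (if aC = (cc β).1 then 1 else 0) := by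
        rw [Finset.sum_comm]
        refine Finset.sum_congr rfl fun β _ => ?_
        rw [← Finset.mul_sum]
        rcases (hpB0 β).lt_or_eq with hβ | hβ
        · rw [hsA β γ hβ hγ aC]
        · rw [← hβ]; simp
      have hRB2γ : ∑ bA', ∑ α, pA α * rb α γ bA' bC =
          ∑ α, pA α * (if bC = (dd α).2 then 1 else 0) := by
        rw [Finset.sum_comm]
        refine Finset.sum_congr rfl fun α _ => ?_
        rw [← Finset.mul_sum]
        rcases (hpA0 α).lt_or_eq with hα | hα
        · rw [hsB α γ hα hγ bC]
        · rw [← hα]; simp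
      have hFQ : tlResp pB ra aB aC γ *
          (∑ β, pB β * (if aC = (cc β).1 then 1 else 0)) =
          ∑ β, pB β * ra β γ aB aC := by
        have hne : ∑ aB', ∑ β, pB β * ra β γ aB' aC ≠ 0 := by
          rw [hRA2γ]; exact ne_of_gt hQApos
        have h := tlResp_mul pB ra aB aC γ hne
        rw [hRA2γ] at h
        exact h
      have hGQ : tlResp pA rb bA bC γ *
          (∑ α, pA α * (if bC = (dd α).2 then 1 else 0)) =
          ∑ α, pA α * rb α γ bA bC := by
        have hne : ∑ bA', ∑ α, pA α * rb α γ bA' bC ≠ 0 := by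
          rw [hRB2γ]; exact ne_of_gt hQBpos
        have h := tlResp_mul pA rb bA bC γ hne
        rw [hRB2γ] at h
        exact h
      calc (ε₁ ^ 3 / ε₂ ^ 6 * mA * mB * ε₂) *
            (pC γ * tlResp pB ra aB aC γ * tlResp pA rb bA bC γ)
          ≤ (ε₁ * ((∑ β, pB β * (if aC = (cc β).1 then 1 else 0)) *
              (∑ α, pA α * (if bC = (dd α).2 then 1 else 0)))) *
            (pC γ * tlResp pB ra aB aC γ * tlResp pA rb bA bC γ) :=
            mul_le_mul_of_nonneg_right hkey
              (mul_nonneg (mul_nonneg (hpC0 γ) (hF0 γ)) (hG0 γ))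
        _ = (ε₁ * pC γ) *
              (tlResp pB ra aB aC γ * (∑ β, pB β * (if aC = (cc β).1 then 1 else 0))) *
              (tlResp pA rb bA bC γ * (∑ α, pA α * (if bC = (dd α).2 then 1 else 0))) := by
            ring
        _ = (ε₁ * pC γ) * (∑ β, pB β * ra β γ aB aC) * (∑ α, pA α * rb α γ bA bC) := by
            rw [hFQ, hGQ]
    · rw [← hγ]; simp
  -- assemble
  calc ε₁ ^ 3 / ε₂ ^ 6 * mA * mB *
      (∑ l, ∑ γ, pl l * (∑ α, ∑ β, pc l α β γ) *
        tlResp pB ra aB aC γ * tlResp pA rb bA bC γ)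
      ≤ ε₁ ^ 3 / ε₂ ^ 6 * mA * mB *
        (ε₂ * ∑ γ, pC γ * tlResp pB ra aB aC γ * tlResp pA rb bA bC γ) :=
        mul_le_mul_of_nonneg_left hstepC
          (mul_nonneg (mul_nonneg (by positivity) hmA0.le) hmB0.le)
    _ ≤ ∑ γ, (ε₁ * pC γ) * (∑ β, pB β * ra β γ aB aC) * (∑ α, pA α * rb α γ bA bC) :=
        hstepD
    _ ≤ ∑ x : Λ × A × B × C, pl x.1 * pc x.1 x.2.1 x.2.2.1 x.2.2.2 *
          ra x.2.2.1 x.2.2.2 aB aC * rb x.2.1 x.2.2.2 bA bC := hstepB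
    _ = ∑ cA, ∑ cB, P aB aC bA bC cA cB := hEq1.symm
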